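/- Let $(h_{i,j})_{i,j\geq 1}$ be i.i.d. positive random variables with $E[h_{1,1}^{-1/\alpha}] < \infty$ for some $\alpha < 0$. Let $(u_j^{i,m})$ and $(u_j^i)$ be non-negative arrays, independent of the $h_{i,j}$, such that $u_j^{i,m} \to u_j^i$ as $m \to \infty$ for all $i,j$, and for every $\eta > 0$ there exists $k$ with $\sum_{i+j\geq k} (u_j^{i,m} + u_j^i) \leq \eta$ for all large $m$. If $\sum_{i,j} u_j^i < \infty$ a.s., then $X_m := \sum_{i,j\geq 1} u_j^{i,m} h_{i,j}^{-1/\alpha}$ converges in probability to $X := \sum_{i,j\geq 1} u_j^i h_{i,j}^{-1/\alpha}$, and both sums are a.s. finite. -/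

import Mathlib

open Filter Topology MeasureTheory ProbabilityTheory
open scoped ENNReal NNReal

private lemma summable_of_tsum_ofReal_ne_top {ι : Type*} {f : ι → ℝ}
    (h0 : ∀ i, 0 ≤ f i) (h : ∑' i, ENNReal.ofReal (f i) ≠ ⊤) : Summable f := by
  have he : ∀ i, ENNReal.ofReal (f i) = ((f i).toNNReal : ℝ≥0∞) := fun i => rfl
  rw [tsum_congr he] at h
  have hs := ENNReal.tsum_coe_ne_top_iff_summable.1 h
  have h2 := NNReal.summable_coe.2 hs
  refine h2.congr fun i => ?_
  simp [Real.coe_toNNReal _ (h0 i)]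

private lemma tsum_subtype_mono' {ι : Type*} (f : ι → ℝ≥0∞) {S T : Set ι} (hST : S ⊆ T) :
    ∑' x : S, f x ≤ ∑' x : T, f x := by
  rw [tsum_subtype, tsum_subtype]
  exact ENNReal.tsum_le_tsum fun i =>
    Set.indicator_le_indicator_of_subset hST (fun _ => zero_le) i

private lemma inner_lemma {I : Type*} [Countable I] {ν : Measure (ℕ × ℕ → ℝ)}
    (cod : I → ℕ × ℕ) (w : I → ℝ≥0∞) (c : ℝ) (Ch : ℝ≥0∞)
    (hcoord : ∀ q : ℕ × ℕ, ∫⁻ H, ENNReal.ofReal (H q ^ c) ∂ν = Ch) :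
    ∫⁻ H, ∑' i, w i * ENNReal.ofReal (H (cod i) ^ c) ∂ν = (∑' i, w i) * Ch := by
  rw [lintegral_tsum fun i =>
    ((((measurable_pi_apply (cod i)).pow measurable_const).ennreal_ofReal).const_mul
      (w i)).aemeasurable]
  calc ∑' i, ∫⁻ H, w i * ENNReal.ofReal (H (cod i) ^ c) ∂ν
      = ∑' i, w i * Ch := by
        refine tsum_congr fun i => ?_
        rw [lintegral_const_mul _
          ((measurable_pi_apply (cod i)).pow measurable_const).ennreal_ofReal, hcoord]
    _ = (∑' i, w i) * Ch := ENNReal.tsum_mul_right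

/-- Let `(h i j)` be i.i.d. positive random variables with `E[h^{-1/α}] < ∞`
(`α < 0`), and `(u m i j)`, `(ulim i j)` non-negative random arrays independent
of the `h`'s, with `u m i j → ulim i j` a.s. as `m → ∞` and a uniform a.s. tail
bound.  If `∑ ulim < ∞` a.s., then `X_m := ∑_{i,j} (u m i j) h_{ij}^{-1/α}`
converges in probability to `X := ∑_{i,j} (ulim i j) h_{ij}^{-1/α}`, and the
sums defining `X_m` and `X` are a.s. finite (summable). -/
theorem stmt16 {Ω : Type*} [MeasurableSpace Ω] (P : Measure Ω) [IsProbabilityMeasure P]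
    (α : ℝ) (hα : α < 0)
    (h : ℕ → ℕ → Ω → ℝ) (hh_meas : ∀ i j, Measurable (h i j))
    (hh_pos : ∀ i j, ∀ᵐ ω ∂P, 0 < h i j ω)
    (hh_indep : iIndepFun
      (fun (p : ℕ × ℕ) ω => h p.1 p.2 ω) P)
    (hh_ident : ∀ i j, Measure.map (h i j) P = Measure.map (h 0 0) P)
    (hh_mom : Integrable (fun ω => h 0 0 ω ^ (-(1 / α))) P)
    (u : ℕ → ℕ → ℕ → Ω → ℝ) (ulim : ℕ → ℕ → Ω → ℝ)
    (hu_meas : ∀ m i j, Measurable (u m i j)) (hulim_meas : ∀ i j, Measurable (ulim i j))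
    (hu_nonneg : ∀ m i j ω, 0 ≤ u m i j ω) (hulim_nonneg : ∀ i j ω, 0 ≤ ulim i j ω)
    -- the arrays `u`, `ulim` are (jointly) independent of the family `h`
    (hu_indep : IndepFun
      (fun ω => ((fun m i j => u m i j ω, fun i j => ulim i j ω) :
        (ℕ → ℕ → ℕ → ℝ) × (ℕ → ℕ → ℝ)))
      (fun ω => (fun p : ℕ × ℕ => h p.1 p.2 ω)) P)
    (hconv : ∀ᵐ ω ∂P, ∀ i j, Tendsto (fun m => u m i j ω) atTop (𝓝 (ulim i j ω)))
    (htail : ∀ᵐ ω ∂P, ∀ η > (0 : ℝ), ∃ k : ℕ, ∀ᶠ m in atTop,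
      ∑' p : {q : ℕ × ℕ // k ≤ q.1 + q.2}, (u m p.1.1 p.1.2 ω + ulim p.1.1 p.1.2 ω) ≤ η)
    (hu_sum : ∀ m, ∀ᵐ ω ∂P, Summable (fun p : ℕ × ℕ => u m p.1 p.2 ω))
    (hulim_sum : ∀ᵐ ω ∂P, Summable (fun p : ℕ × ℕ => ulim p.1 p.2 ω)) :
    TendstoInMeasure P
        (fun m ω => ∑' p : ℕ × ℕ, u m p.1 p.2 ω * h p.1 p.2 ω ^ (-(1 / α))) atTop
        (fun ω => ∑' p : ℕ × ℕ, ulim p.1 p.2 ω * h p.1 p.2 ω ^ (-(1 / α))) ∧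
      (∀ᵐ ω ∂P, Summable (fun p : ℕ × ℕ => ulim p.1 p.2 ω * h p.1 p.2 ω ^ (-(1 / α)))) ∧
      (∀ m, ∀ᵐ ω ∂P, Summable (fun p : ℕ × ℕ => u m p.1 p.2 ω * h p.1 p.2 ω ^ (-(1 / α)))) := by
  classical
  set c : ℝ := -(1 / α) with hc
  set T : Ω → (ℕ → ℕ → ℕ → ℝ) × (ℕ → ℕ → ℝ) :=
    fun ω => (fun m i j => u m i j ω, fun i j => ulim i j ω) with hTdef
  set Hf : Ω → (ℕ × ℕ → ℝ) := fun ω => fun p : ℕ × ℕ => h p.1 p.2 ω with hHdef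
  have hT_meas : Measurable T :=
    Measurable.prodMk
      (measurable_pi_lambda _ fun m => measurable_pi_lambda _ fun i =>
        measurable_pi_lambda _ fun j => hu_meas m i j)
      (measurable_pi_lambda _ fun i => measurable_pi_lambda _ fun j => hulim_meas i j)
  have hHf_meas : Measurable Hf := measurable_pi_lambda _ fun p => hh_meas p.1 p.2
  have hIndep : IndepFun T Hf P := hu_indep
  set μ : Measure ((ℕ → ℕ → ℕ → ℝ) × (ℕ → ℕ → ℝ)) := P.map T with hμdef
  set ν : Measure (ℕ × ℕ → ℝ) := P.map Hf with hνdef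
  haveI : IsProbabilityMeasure μ := Measure.isProbabilityMeasure_map hT_meas.aemeasurable
  haveI : IsProbabilityMeasure ν := Measure.isProbabilityMeasure_map hHf_meas.aemeasurable
  have hmap : P.map (fun ω => (T ω, Hf ω)) = μ.prod ν :=
    (indepFun_iff_map_prod_eq_prod_map_map hT_meas.aemeasurable hHf_meas.aemeasurable).1 hIndep
  set Ch : ℝ≥0∞ := ∫⁻ ω, ENNReal.ofReal (h 0 0 ω ^ c) ∂P with hChdef
  have hCh_top : Ch ≠ ⊤ := by
    refine ne_top_of_le_ne_top hh_mom.2.ne (lintegral_mono fun ω => ?_)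
    exact Real.ofReal_le_enorm _
  have hmc : Measurable fun x : ℝ => ENNReal.ofReal (x ^ c) :=
    (measurable_id.pow measurable_const).ennreal_ofReal
  have hmomq : ∀ q : ℕ × ℕ, ∫⁻ ω, ENNReal.ofReal (h q.1 q.2 ω ^ c) ∂P = Ch := by
    intro q
    calc ∫⁻ ω, ENNReal.ofReal (h q.1 q.2 ω ^ c) ∂P
        = ∫⁻ x, ENNReal.ofReal (x ^ c) ∂(P.map (h q.1 q.2)) :=
          (lintegral_map hmc (hh_meas _ _)).symm
      _ = ∫⁻ x, ENNReal.ofReal (x ^ c) ∂(P.map (h 0 0)) := by rw [hh_ident]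
      _ = Ch := lintegral_map hmc (hh_meas 0 0)
  have hcoord : ∀ q : ℕ × ℕ, ∫⁻ H, ENNReal.ofReal (H q ^ c) ∂ν = Ch := by
    intro q
    rw [hνdef, lintegral_map (((measurable_pi_apply q).pow measurable_const).ennreal_ofReal)
      hHf_meas]
    exact hmomq q
  have hh_pos_all : ∀ᵐ ω ∂P, ∀ p : ℕ × ℕ, 0 < h p.1 p.2 ω :=
    ae_all_iff.2 fun p => hh_pos p.1 p.2
  have hmt1 : ∀ m i j, Measurable fun t : (ℕ → ℕ → ℕ → ℝ) × (ℕ → ℕ → ℝ) => t.1 m i j :=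
    fun m i j => (measurable_pi_apply j).comp ((measurable_pi_apply i).comp
      ((measurable_pi_apply m).comp measurable_fst))
  have hmt2 : ∀ i j, Measurable fun t : (ℕ → ℕ → ℕ → ℝ) × (ℕ → ℕ → ℝ) => t.2 i j :=
    fun i j => (measurable_pi_apply j).comp ((measurable_pi_apply i).comp measurable_snd)
  have SUMM : ∀ V : ((ℕ → ℕ → ℕ → ℝ) × (ℕ → ℕ → ℝ)) → (ℕ × ℕ) → ℝ,
      (∀ p, Measurable fun t => V t p) →
      (∀ ω p, 0 ≤ V (T ω) p) →
      (∀ᵐ ω ∂P, Summable fun p => V (T ω) p) →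
      ∀ᵐ ω ∂P, Summable fun p : ℕ × ℕ => V (T ω) p * h p.1 p.2 ω ^ c := by
    intro V hV hVnn hVsum
    set F : ((ℕ → ℕ → ℕ → ℝ) × (ℕ → ℕ → ℝ)) × (ℕ × ℕ → ℝ) → ℝ≥0∞ :=
      fun z => ∑' p : ℕ × ℕ, ENNReal.ofReal (V z.1 p) * ENNReal.ofReal (z.2 p ^ c) with hFdef
    have hF_meas : Measurable F := by
      apply Measurable.ennreal_tsum
      intro p
      exact (((hV p).comp measurable_fst).ennreal_ofReal).mul
        ((((measurable_pi_apply p).comp measurable_snd).pow measurable_const).ennreal_ofReal)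
    have hbad_meas : MeasurableSet {z :
        ((ℕ → ℕ → ℕ → ℝ) × (ℕ → ℕ → ℝ)) × (ℕ × ℕ → ℝ) | F z = ⊤} :=
      hF_meas (measurableSet_singleton ⊤)
    have hslice : ∀ t, (∑' p : ℕ × ℕ, ENNReal.ofReal (V t p)) ≠ ⊤ →
        ν {H | F (t, H) = ⊤} = 0 := by
      intro t ht
      have hFt : Measurable fun H => F (t, H) := hF_meas.comp measurable_prodMk_left
      have hint : ∫⁻ H, F (t, H) ∂ν = (∑' p : ℕ × ℕ, ENNReal.ofReal (V t p)) * Ch :=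
        inner_lemma (fun p => p) (fun p => ENNReal.ofReal (V t p)) c Ch hcoord
      have hae := ae_lt_top hFt (by rw [hint]; exact ENNReal.mul_ne_top ht hCh_top)
      have h0 : ν {H | ¬ F (t, H) < ⊤} = 0 := ae_iff.1 hae
      simpa [lt_top_iff_ne_top, not_not] using h0
    have hμae : ∀ᵐ t ∂μ, (∑' p : ℕ × ℕ, ENNReal.ofReal (V t p)) ≠ ⊤ := by
      have hms : MeasurableSet {t : (ℕ → ℕ → ℕ → ℝ) × (ℕ → ℕ → ℝ) |
          (∑' p : ℕ × ℕ, ENNReal.ofReal (V t p)) ≠ ⊤} :=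
        ((Measurable.ennreal_tsum fun p => (hV p).ennreal_ofReal)
          (measurableSet_singleton ⊤)).compl
      rw [hμdef, ae_map_iff hT_meas.aemeasurable hms]
      filter_upwards [hVsum] with ω hω
      rw [← ENNReal.ofReal_tsum_of_nonneg (hVnn ω) hω]
      exact ENNReal.ofReal_ne_top
    have hbad0 : (μ.prod ν) {z | F z = ⊤} = 0 := by
      rw [Measure.prod_apply hbad_meas]
      have h0 : (fun t => ν (Prod.mk t ⁻¹' {z | F z = ⊤})) =ᵐ[μ] fun _ => 0 := by
        filter_upwards [hμae] with t ht
        exact hslice t ht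
      rw [lintegral_congr_ae h0, lintegral_zero]
    have hPbad : P {ω | F (T ω, Hf ω) = ⊤} = 0 := by
      have heq : {ω | F (T ω, Hf ω) = ⊤} = (fun ω => (T ω, Hf ω)) ⁻¹' {z | F z = ⊤} := rfl
      rw [heq, ← Measure.map_apply (hT_meas.prodMk hHf_meas) hbad_meas, hmap]
      exact hbad0
    have hPae : ∀ᵐ ω ∂P, F (T ω, Hf ω) ≠ ⊤ := by
      rw [ae_iff]; simpa [not_not] using hPbad
    filter_upwards [hPae, hh_pos_all] with ω hωF hωh
    refine summable_of_tsum_ofReal_ne_top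
      (fun p => mul_nonneg (hVnn ω p) (Real.rpow_pos_of_pos (hωh p) c).le) ?_
    have heq : ∀ p : ℕ × ℕ, ENNReal.ofReal (V (T ω) p * h p.1 p.2 ω ^ c)
        = ENNReal.ofReal (V (T ω) p) * ENNReal.ofReal (h p.1 p.2 ω ^ c) :=
      fun p => ENNReal.ofReal_mul (hVnn ω p)
    rw [tsum_congr heq]
    exact hωF
  have hXsum : ∀ᵐ ω ∂P, Summable fun p : ℕ × ℕ => ulim p.1 p.2 ω * h p.1 p.2 ω ^ c :=
    SUMM (fun t p => t.2 p.1 p.2) (fun p => hmt2 p.1 p.2)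
      (fun ω p => hulim_nonneg p.1 p.2 ω) hulim_sum
  have hXmsum : ∀ m, ∀ᵐ ω ∂P, Summable fun p : ℕ × ℕ => u m p.1 p.2 ω * h p.1 p.2 ω ^ c :=
    fun m => SUMM (fun t p => t.1 m p.1 p.2) (fun p => hmt1 m p.1 p.2)
      (fun ω p => hu_nonneg m p.1 p.2 ω) (hu_sum m)
  refine ⟨?_, hXsum, hXmsum⟩
  rw [tendstoInMeasure_iff_dist]
  intro ε hε
  rw [ENNReal.tendsto_atTop_zero]
  intro δ hδ
  obtain ⟨d, hd0, hdδ⟩ : ∃ d : ℝ, 0 < d ∧ ENNReal.ofReal d ≤ δ := by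
    rcases eq_or_ne δ ⊤ with rfl | hδt
    · exact ⟨1, one_pos, le_top⟩
    · exact ⟨δ.toReal, ENNReal.toReal_pos hδ.ne' hδt, by rw [ENNReal.ofReal_toReal hδt]⟩
  set η : ℝ := ε * d / (8 * (Ch.toReal + 1)) with hηdef
  have hη : 0 < η := by
    have hA : (0:ℝ) ≤ Ch.toReal := ENNReal.toReal_nonneg
    rw [hηdef]
    positivity
  set tailE : ℕ → ℕ → Ω → ℝ≥0∞ := fun k m ω =>
    ∑' p : {q : ℕ × ℕ // k ≤ q.1 + q.2},
      ENNReal.ofReal (u m p.1.1 p.1.2 ω + ulim p.1.1 p.1.2 ω) with htailEdef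
  have htailE_meas : ∀ k m, Measurable (tailE k m) := fun k m =>
    Measurable.ennreal_tsum fun p => ((hu_meas m _ _).add (hulim_meas _ _)).ennreal_ofReal
  have htailE_anti : ∀ {k k' : ℕ}, k ≤ k' → ∀ m ω, tailE k' m ω ≤ tailE k m ω := by
    intro k k' hkk m ω
    exact tsum_subtype_mono'
      (fun q : ℕ × ℕ => ENNReal.ofReal (u m q.1 q.2 ω + ulim q.1 q.2 ω))
      (fun q hq => le_trans hkk hq)
  set D : ℕ → Set Ω := fun k => {ω | ∀ m, k ≤ m → tailE k m ω ≤ ENNReal.ofReal η} with hDdef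
  have hD_meas : ∀ k, MeasurableSet (D k) := by
    intro k
    have hDeq : D k = ⋂ m, ⋂ _ : k ≤ m, {ω | tailE k m ω ≤ ENNReal.ofReal η} := by
      ext ω; simp [hDdef]
    rw [hDeq]
    exact MeasurableSet.iInter fun m => MeasurableSet.iInter fun _ =>
      measurableSet_le (htailE_meas k m) measurable_const
  have huall : ∀ᵐ ω ∂P, (∀ m, Summable fun p : ℕ × ℕ => u m p.1 p.2 ω) ∧
      (Summable fun p : ℕ × ℕ => ulim p.1 p.2 ω) := (ae_all_iff.2 hu_sum).and hulim_sum
  have hDU : ∀ᵐ ω ∂P, ω ∈ ⋃ k, D k := by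
    filter_upwards [htail, huall] with ω hta hsm
    obtain ⟨k, hk⟩ := hta η hη
    obtain ⟨N, hN⟩ := eventually_atTop.1 hk
    refine Set.mem_iUnion.2 ⟨max k N, fun m hm => ?_⟩
    refine (htailE_anti (le_max_left _ _) m ω).trans ?_
    have hsub : Summable fun p : {q : ℕ × ℕ // k ≤ q.1 + q.2} =>
        u m p.1.1 p.1.2 ω + ulim p.1.1 p.1.2 ω :=
      ((hsm.1 m).add hsm.2).subtype _
    have hORsum := ENNReal.ofReal_tsum_of_nonneg
      (f := fun p : {q : ℕ × ℕ // k ≤ q.1 + q.2} => u m p.1.1 p.1.2 ω + ulim p.1.1 p.1.2 ω)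
      (fun p => add_nonneg (hu_nonneg _ _ _ _) (hulim_nonneg _ _ _)) hsub
    simp only [htailEdef]
    rw [← hORsum]
    exact ENNReal.ofReal_le_ofReal (hN m (le_trans (le_max_right _ _) hm))
  have hDmono : Monotone D := by
    intro a b hab ω hω m hm
    exact (htailE_anti hab m ω).trans (hω m (hab.trans hm))
  have hDtend : Tendsto (fun k => P (D k)) atTop (𝓝 (P (⋃ k, D k))) :=
    tendsto_measure_iUnion_atTop hDmono
  have hPU : P (⋃ k, D k) = 1 := by
    rw [← measure_univ (μ := P)]
    exact measure_congr (Filter.eventuallyEq_univ.2 hDU)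
  have hd4 : 0 < ENNReal.ofReal (d / 4) := ENNReal.ofReal_pos.2 (by linarith)
  have hlt' : (1 : ℝ≥0∞) - ENNReal.ofReal (d / 4) < P (⋃ k, D k) := by
    rw [hPU]
    exact ENNReal.sub_lt_self ENNReal.one_ne_top one_ne_zero hd4.ne'
  obtain ⟨j₀, hj₀⟩ := (hDtend.eventually (eventually_gt_nhds hlt')).exists
  have hGc : P (D j₀)ᶜ ≤ ENNReal.ofReal (d / 4) := by
    rw [prob_compl_eq_one_sub (hD_meas j₀), tsub_le_iff_right]
    calc (1 : ℝ≥0∞) ≤ 1 - ENNReal.ofReal (d / 4) + ENNReal.ofReal (d / 4) := le_tsub_add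
      _ ≤ ENNReal.ofReal (d / 4) + P (D j₀) := by
          rw [add_comm]; exact add_le_add_right hj₀.le _
  set sfin : Finset (ℕ × ℕ) := (Finset.range j₀ ×ˢ Finset.range j₀).filter
    (fun p => p.1 + p.2 < j₀) with hsfindef
  have hsfin_mem : ∀ p : ℕ × ℕ, p ∈ sfin ↔ p.1 + p.2 < j₀ := by
    intro p
    simp only [hsfindef, Finset.mem_filter, Finset.mem_product, Finset.mem_range]
    omega
  set fin : ℕ → Ω → ℝ := fun m ω =>
    ∑ p ∈ sfin, (u m p.1 p.2 ω - ulim p.1 p.2 ω) * h p.1 p.2 ω ^ c with hfindef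
  have hfin_meas : ∀ m, Measurable (fin m) := fun m => Finset.measurable_sum _ fun p _ =>
    ((hu_meas m p.1 p.2).sub (hulim_meas p.1 p.2)).mul ((hh_meas p.1 p.2).pow measurable_const)
  have hfin_ae : ∀ᵐ ω ∂P, Tendsto (fun m => fin m ω) atTop (𝓝 ((fun _ : Ω => (0:ℝ)) ω)) := by
    filter_upwards [hconv] with ω hω
    have h0 : Tendsto (fun m => fin m ω) atTop (𝓝 (∑ p ∈ sfin, 0)) := by
      simp only [hfindef]
      apply tendsto_finset_sum
      intro p _
      have htt : Tendsto (fun m => (u m p.1 p.2 ω - ulim p.1 p.2 ω) * h p.1 p.2 ω ^ c) atTop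
          (𝓝 ((ulim p.1 p.2 ω - ulim p.1 p.2 ω) * h p.1 p.2 ω ^ c)) :=
        ((hω p.1 p.2).sub tendsto_const_nhds).mul_const _
      simpa using htt
    simpa using h0
  have hfinTIM : TendstoInMeasure P fin atTop (fun _ => (0 : ℝ)) :=
    tendstoInMeasure_of_tendsto_ae (fun m => (hfin_meas m).aestronglyMeasurable) hfin_ae
  have hfin_ev : ∀ᶠ m in atTop,
      P {ω | ε / 2 ≤ dist (fin m ω) 0} ≤ ENNReal.ofReal (d / 4) :=
    ((tendstoInMeasure_iff_dist.1 hfinTIM (ε / 2) (half_pos hε)).eventually (eventually_lt_nhds hd4)).mono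
      fun m hm => hm.le
  set tailHE : ℕ → Ω → ℝ≥0∞ := fun m ω =>
    ∑' p : {q : ℕ × ℕ // j₀ ≤ q.1 + q.2},
      ENNReal.ofReal (u m p.1.1 p.1.2 ω + ulim p.1.1 p.1.2 ω)
        * ENNReal.ofReal (h p.1.1 p.1.2 ω ^ c) with htailHEdef
  have htailHE_meas : ∀ m, Measurable (tailHE m) := fun m =>
    Measurable.ennreal_tsum fun p =>
      (((hu_meas m _ _).add (hulim_meas _ _)).ennreal_ofReal).mul
        (((hh_meas _ _).pow measurable_const).ennreal_ofReal)
  have hmarkov : ∀ m, j₀ ≤ m →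
      P (D j₀ ∩ {ω | ENNReal.ofReal (ε / 2) ≤ tailHE m ω}) ≤ ENNReal.ofReal (d / 4) := by
    intro m hm
    set W : ((ℕ → ℕ → ℕ → ℝ) × (ℕ → ℕ → ℝ)) → ℝ≥0∞ := fun t =>
      ∑' p : {q : ℕ × ℕ // j₀ ≤ q.1 + q.2},
        ENNReal.ofReal (t.1 m p.1.1 p.1.2 + t.2 p.1.1 p.1.2) with hWdef
    have hW_meas : Measurable W := Measurable.ennreal_tsum fun p =>
      ((hmt1 m _ _).add (hmt2 _ _)).ennreal_ofReal
    set G' : Set ((ℕ → ℕ → ℕ → ℝ) × (ℕ → ℕ → ℝ)) := {t | W t ≤ ENNReal.ofReal η} with hG'def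
    have hG'_meas : MeasurableSet G' := measurableSet_le hW_meas measurable_const
    set S2 : ((ℕ → ℕ → ℕ → ℝ) × (ℕ → ℕ → ℝ)) × (ℕ × ℕ → ℝ) → ℝ≥0∞ := fun z =>
      ∑' p : {q : ℕ × ℕ // j₀ ≤ q.1 + q.2},
        ENNReal.ofReal (z.1.1 m p.1.1 p.1.2 + z.1.2 p.1.1 p.1.2)
          * ENNReal.ofReal (z.2 p.1 ^ c) with hS2def
    have hS2_meas : Measurable S2 := Measurable.ennreal_tsum fun p =>
      ((((hmt1 m _ _).comp measurable_fst).add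
        ((hmt2 _ _).comp measurable_fst)).ennreal_ofReal).mul
        ((((measurable_pi_apply _).comp measurable_snd).pow measurable_const).ennreal_ofReal)
    set F : ((ℕ → ℕ → ℕ → ℝ) × (ℕ → ℕ → ℝ)) × (ℕ × ℕ → ℝ) → ℝ≥0∞ := fun z =>
      G'.indicator (fun _ => (1 : ℝ≥0∞)) z.1 * S2 z with hFdef
    have hF_meas : Measurable F :=
      ((measurable_one.indicator hG'_meas).comp measurable_fst).mul hS2_meas
    have hpt : ∀ ω, (D j₀).indicator (tailHE m) ω ≤ F (T ω, Hf ω) := by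
      intro ω
      by_cases hω : ω ∈ D j₀
      · rw [Set.indicator_of_mem hω]
        have hTω : T ω ∈ G' := hω m hm
        have hFeq : F (T ω, Hf ω) = S2 (T ω, Hf ω) := by
          simp [hFdef, Set.indicator_of_mem hTω]
        exact le_of_eq hFeq.symm
      · rw [Set.indicator_of_notMem hω]; exact zero_le
    have hstep : ∫⁻ ω, (D j₀).indicator (tailHE m) ω ∂P ≤ Ch * ENNReal.ofReal η := by
      calc ∫⁻ ω, (D j₀).indicator (tailHE m) ω ∂P
          ≤ ∫⁻ ω, F (T ω, Hf ω) ∂P := lintegral_mono hpt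
        _ = ∫⁻ z, F z ∂(μ.prod ν) := by
            rw [← hmap, lintegral_map hF_meas (hT_meas.prodMk hHf_meas)]
        _ = ∫⁻ t, ∫⁻ H, F (t, H) ∂ν ∂μ := lintegral_prod _ hF_meas.aemeasurable
        _ ≤ ∫⁻ _, Ch * ENNReal.ofReal η ∂μ := by
            apply lintegral_mono
            intro t
            show ∫⁻ H, F (t, H) ∂ν ≤ Ch * ENNReal.ofReal η
            by_cases ht : t ∈ G'
            · have hFt : ∀ H, F (t, H) = S2 (t, H) := fun H => by
                simp [hFdef, Set.indicator_of_mem ht]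
              rw [lintegral_congr hFt]
              calc ∫⁻ H, S2 (t, H) ∂ν = W t * Ch :=
                    inner_lemma (fun p : {q : ℕ × ℕ // j₀ ≤ q.1 + q.2} => (p : ℕ × ℕ))
                      (fun p => ENNReal.ofReal (t.1 m p.1.1 p.1.2 + t.2 p.1.1 p.1.2)) c Ch hcoord
                _ ≤ ENNReal.ofReal η * Ch := mul_le_mul_left ht _
                _ = Ch * ENNReal.ofReal η := mul_comm _ _
            · have hFt : ∀ H, F (t, H) = 0 := fun H => by
                simp [hFdef, Set.indicator_of_notMem ht]
              rw [lintegral_congr hFt, lintegral_zero]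
              exact zero_le
        _ = Ch * ENNReal.ofReal η := by simp
    have hsub2 : D j₀ ∩ {ω | ENNReal.ofReal (ε / 2) ≤ tailHE m ω} ⊆
        {ω | ENNReal.ofReal (ε / 2) ≤ (D j₀).indicator (tailHE m) ω} := by
      rintro ω ⟨h1, h2⟩
      simpa [Set.indicator_of_mem h1] using h2
    have h1 := mul_meas_ge_le_lintegral₀ (μ := P)
      ((htailHE_meas m).indicator (hD_meas j₀)).aemeasurable (ENNReal.ofReal (ε / 2))
    have h2 : ENNReal.ofReal (ε / 2) * P (D j₀ ∩ {ω | ENNReal.ofReal (ε / 2) ≤ tailHE m ω})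
        ≤ Ch * ENNReal.ofReal η :=
      le_trans (mul_le_mul_right (measure_mono hsub2) _) (h1.trans hstep)
    have hε2 : ENNReal.ofReal (ε / 2) ≠ 0 := (ENNReal.ofReal_pos.2 (half_pos hε)).ne'
    have hCHη : Ch * ENNReal.ofReal η ≤ ENNReal.ofReal (ε * d / 8) := by
      calc Ch * ENNReal.ofReal η = ENNReal.ofReal Ch.toReal * ENNReal.ofReal η := by
            rw [ENNReal.ofReal_toReal hCh_top]
        _ = ENNReal.ofReal (Ch.toReal * η) := (ENNReal.ofReal_mul ENNReal.toReal_nonneg).symm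
        _ ≤ ENNReal.ofReal (ε * d / 8) := by
            apply ENNReal.ofReal_le_ofReal
            have hA : (0:ℝ) ≤ Ch.toReal := ENNReal.toReal_nonneg
            have hstep2 : Ch.toReal * η ≤ (Ch.toReal + 1) * η :=
              mul_le_mul_of_nonneg_right (by linarith) hη.le
            refine hstep2.trans (le_of_eq ?_)
            rw [hηdef]
            have hne : Ch.toReal + 1 ≠ 0 := by positivity
            field_simp
    calc P (D j₀ ∩ {ω | ENNReal.ofReal (ε / 2) ≤ tailHE m ω})
        ≤ Ch * ENNReal.ofReal η / ENNReal.ofReal (ε / 2) :=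
          (ENNReal.le_div_iff_mul_le (Or.inl hε2) (Or.inl ENNReal.ofReal_ne_top)).2
            (by rwa [mul_comm] at h2)
      _ ≤ ENNReal.ofReal (ε * d / 8) / ENNReal.ofReal (ε / 2) :=
          ENNReal.div_le_div_right hCHη _
      _ = ENNReal.ofReal (ε * d / 8 / (ε / 2)) := (ENNReal.ofReal_div_of_pos (half_pos hε)).symm
      _ = ENNReal.ofReal (d / 4) := by
          congr 1
          have hεne : ε ≠ 0 := hε.ne'
          field_simp
          ring
  have hgood : ∀ m : ℕ, ∀ᵐ ω ∂P, ((∀ p : ℕ × ℕ, 0 < h p.1 p.2 ω) ∧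
      Summable (fun p : ℕ × ℕ => u m p.1 p.2 ω * h p.1 p.2 ω ^ c) ∧
      Summable (fun p : ℕ × ℕ => ulim p.1 p.2 ω * h p.1 p.2 ω ^ c)) := fun m => by
    filter_upwards [hh_pos_all, hXmsum m, hXsum] with ω a b cc
    exact ⟨a, b, cc⟩
  obtain ⟨N₁, hN₁⟩ := eventually_atTop.1 hfin_ev
  refine ⟨max j₀ N₁, fun m hm => ?_⟩
  have hmj : j₀ ≤ m := le_trans (le_max_left _ _) hm
  set Bad : Set Ω := {ω | ¬ ((∀ p : ℕ × ℕ, 0 < h p.1 p.2 ω) ∧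
      Summable (fun p : ℕ × ℕ => u m p.1 p.2 ω * h p.1 p.2 ω ^ c) ∧
      Summable (fun p : ℕ × ℕ => ulim p.1 p.2 ω * h p.1 p.2 ω ^ c))} with hBaddef
  have hBad0 : P Bad = 0 := ae_iff.1 (hgood m)
  have hincl : {ω | ε ≤ dist (∑' p : ℕ × ℕ, u m p.1 p.2 ω * h p.1 p.2 ω ^ c)
        (∑' p : ℕ × ℕ, ulim p.1 p.2 ω * h p.1 p.2 ω ^ c)} ⊆
      Bad ∪ ({ω | ε / 2 ≤ dist (fin m ω) 0} ∪
        ((D j₀ ∩ {ω | ENNReal.ofReal (ε / 2) ≤ tailHE m ω}) ∪ (D j₀)ᶜ)) := by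
    intro ω hω
    simp only [Set.mem_setOf_eq] at hω
    by_cases hg : ((∀ p : ℕ × ℕ, 0 < h p.1 p.2 ω) ∧
        Summable (fun p : ℕ × ℕ => u m p.1 p.2 ω * h p.1 p.2 ω ^ c) ∧
        Summable (fun p : ℕ × ℕ => ulim p.1 p.2 ω * h p.1 p.2 ω ^ c))
    swap
    · exact Or.inl hg
    right
    by_cases hfin2 : ε / 2 ≤ dist (fin m ω) 0
    · exact Or.inl hfin2
    right
    by_cases hD : ω ∈ D j₀
    swap
    · exact Or.inr hD
    left
    refine ⟨hD, ?_⟩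
    obtain ⟨hp, hfm, hfl⟩ := hg
    set f : ℕ × ℕ → ℝ := fun p => u m p.1 p.2 ω * h p.1 p.2 ω ^ c with hfdef
    set g : ℕ × ℕ → ℝ := fun p => ulim p.1 p.2 ω * h p.1 p.2 ω ^ c with hgdef
    have hsplitf : ∑ p ∈ sfin, f p + ∑' p : {x : ℕ × ℕ // x ∉ sfin}, f ↑p = ∑' p, f p :=
      Summable.sum_add_tsum_subtype_compl hfm sfin
    have hsplitg : ∑ p ∈ sfin, g p + ∑' p : {x : ℕ × ℕ // x ∉ sfin}, g ↑p = ∑' p, g p :=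
      Summable.sum_add_tsum_subtype_compl hfl sfin
    have he' : ∀ x : ℕ × ℕ, j₀ ≤ x.1 + x.2 ↔ x ∉ sfin := by
      intro x
      simp [hsfin_mem, not_lt]
    set e : {q : ℕ × ℕ // j₀ ≤ q.1 + q.2} ≃ {x : ℕ × ℕ // x ∉ sfin} :=
      Equiv.subtypeEquivRight he' with hedef
    have htfeq : ∑' p : {x : ℕ × ℕ // x ∉ sfin}, f ↑p
        = ∑' p : {q : ℕ × ℕ // j₀ ≤ q.1 + q.2}, f ↑p := by
      rw [← Equiv.tsum_eq e (fun p : {x : ℕ × ℕ // x ∉ sfin} => f ↑p)]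
      exact tsum_congr fun q => rfl
    have htgeq : ∑' p : {x : ℕ × ℕ // x ∉ sfin}, g ↑p
        = ∑' p : {q : ℕ × ℕ // j₀ ≤ q.1 + q.2}, g ↑p := by
      rw [← Equiv.tsum_eq e (fun p : {x : ℕ × ℕ // x ∉ sfin} => g ↑p)]
      exact tsum_congr fun q => rfl
    set tf : ℝ := ∑' p : {q : ℕ × ℕ // j₀ ≤ q.1 + q.2}, f ↑p with htfdef
    set tg : ℝ := ∑' p : {q : ℕ × ℕ // j₀ ≤ q.1 + q.2}, g ↑p with htgdef
    have hfsub : Summable fun p : {q : ℕ × ℕ // j₀ ≤ q.1 + q.2} => f ↑p := hfm.subtype _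
    have hgsub : Summable fun p : {q : ℕ × ℕ // j₀ ≤ q.1 + q.2} => g ↑p := hfl.subtype _
    have htf0 : 0 ≤ tf := by
      rw [htfdef]
      exact tsum_nonneg fun p =>
        mul_nonneg (hu_nonneg _ _ _ _) (Real.rpow_pos_of_pos (hp _) c).le
    have htg0 : 0 ≤ tg := by
      rw [htgdef]
      exact tsum_nonneg fun p =>
        mul_nonneg (hulim_nonneg _ _ _) (Real.rpow_pos_of_pos (hp _) c).le
    have hfin_eq : ∑ p ∈ sfin, f p - ∑ p ∈ sfin, g p = fin m ω := by
      simp only [hfindef, hfdef, hgdef, ← Finset.sum_sub_distrib]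
      exact Finset.sum_congr rfl fun p _ => by ring
    have habs : dist (∑' p, f p) (∑' p, g p) ≤ |fin m ω| + (tf + tg) := by
      rw [Real.dist_eq, ← hsplitf, ← hsplitg, htfeq, htgeq]
      have habs2 : |tf - tg| ≤ tf + tg := by
        rw [abs_le]; constructor <;> linarith
      calc |(∑ p ∈ sfin, f p + tf) - (∑ p ∈ sfin, g p + tg)|
          = |(∑ p ∈ sfin, f p - ∑ p ∈ sfin, g p) + (tf - tg)| := by congr 1; ring
        _ ≤ |∑ p ∈ sfin, f p - ∑ p ∈ sfin, g p| + |tf - tg| := abs_add_le _ _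
        _ ≤ |fin m ω| + (tf + tg) := by rw [hfin_eq]; exact add_le_add le_rfl habs2
    have hεtail : ε / 2 ≤ tf + tg := by
      have hd1 : ε ≤ |fin m ω| + (tf + tg) := hω.trans habs
      have hd2 : |fin m ω| < ε / 2 := by
        have h3 := not_le.1 hfin2
        rwa [dist_zero_right, Real.norm_eq_abs] at h3
      linarith
    have hts : Summable fun p : {q : ℕ × ℕ // j₀ ≤ q.1 + q.2} =>
        (u m p.1.1 p.1.2 ω + ulim p.1.1 p.1.2 ω) * h p.1.1 p.1.2 ω ^ c :=
      (hfsub.add hgsub).congr fun p => by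
        simp only [hfdef, hgdef]; ring
    have htsum_eq : tf + tg = ∑' p : {q : ℕ × ℕ // j₀ ≤ q.1 + q.2},
        (u m p.1.1 p.1.2 ω + ulim p.1.1 p.1.2 ω) * h p.1.1 p.1.2 ω ^ c := by
      rw [htfdef, htgdef, ← Summable.tsum_add hfsub hgsub]
      refine tsum_congr fun p => ?_
      simp only [hfdef, hgdef]; ring
    show ENNReal.ofReal (ε / 2) ≤ tailHE m ω
    calc ENNReal.ofReal (ε / 2) ≤ ENNReal.ofReal (tf + tg) := ENNReal.ofReal_le_ofReal hεtail
      _ = ∑' p : {q : ℕ × ℕ // j₀ ≤ q.1 + q.2},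
            ENNReal.ofReal ((u m p.1.1 p.1.2 ω + ulim p.1.1 p.1.2 ω) * h p.1.1 p.1.2 ω ^ c) := by
          rw [htsum_eq]
          exact ENNReal.ofReal_tsum_of_nonneg (fun p => mul_nonneg
            (add_nonneg (hu_nonneg _ _ _ _) (hulim_nonneg _ _ _))
            (Real.rpow_pos_of_pos (hp _) c).le) hts
      _ = tailHE m ω := tsum_congr fun p => ENNReal.ofReal_mul
            (add_nonneg (hu_nonneg _ _ _ _) (hulim_nonneg _ _ _))
  have hbound : P (Bad ∪ ({ω | ε / 2 ≤ dist (fin m ω) 0} ∪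
      ((D j₀ ∩ {ω | ENNReal.ofReal (ε / 2) ≤ tailHE m ω}) ∪ (D j₀)ᶜ))) ≤ δ := by
    refine le_trans (measure_union_le _ _) ?_
    refine le_trans (add_le_add hBad0.le (le_trans (measure_union_le _ _)
      (add_le_add (hN₁ m (le_trans (le_max_right _ _) hm))
        (le_trans (measure_union_le _ _) (add_le_add (hmarkov m hmj) hGc))))) ?_
    rw [zero_add, ← ENNReal.ofReal_add (by linarith) (by linarith),
      ← ENNReal.ofReal_add (by linarith) (by linarith)]
    exact le_trans (ENNReal.ofReal_le_ofReal (by linarith)) hdδ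
  exact le_trans (measure_mono hincl) hbound
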